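/- Let p be a probability density on ℝ^d and let q(·|·) be a measurable Markov transition density on ℝ^d with p(x)·q(x'|x) > 0 for all x, x'. Then the Metropolis–Hastings acceptance rate satisfies AR = ∫∫ p(x)q(x'|x) min{1, p(x')q(x|x')/(p(x)q(x'|x))} dx dx' ≥ 1 − sqrt( (1/2)·KL( p(x')q(x|x') ‖ p(x)q(x'|x) ) ), where the KL divergence between the two joint densities is KL(f‖g) = ∫∫ f·log(f/g). -/

import Mathlib

open MeasureTheory

open Real

lemma mh_aux_g_mono : MonotoneOn (fun t : ℝ => (t + 1) * Real.log t - 2 * (t - 1)) (Set.Ioi 0) := by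
  have hder : ∀ t ∈ Set.Ioi (0:ℝ), HasDerivAt (fun t : ℝ => (t + 1) * Real.log t - 2 * (t - 1))
      (Real.log t + t⁻¹ - 1) t := by
    intro t ht
    have ht0 : (t:ℝ) ≠ 0 := ne_of_gt ht
    have h1 : HasDerivAt (fun t : ℝ => (t + 1) * Real.log t)
        (1 * Real.log t + (t + 1) * t⁻¹) t :=
      ((hasDerivAt_id t).add_const 1).mul (Real.hasDerivAt_log ht0)
    have h2 : HasDerivAt (fun t : ℝ => 2 * (t - 1)) 2 t := by
      simpa using ((hasDerivAt_id t).sub_const 1).const_mul 2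
    have := h1.sub h2
    refine this.congr_deriv ?_
    rw [add_mul, mul_inv_cancel₀ ht0]
    ring
  apply monotoneOn_of_deriv_nonneg (convex_Ioi 0)
  · exact ContinuousOn.sub (by fun_prop (disch := intro t ht; exact ne_of_gt ht)) (by fun_prop)
  · intro t ht
    rw [interior_Ioi] at ht
    exact (hder t ht).differentiableAt.differentiableWithinAt
  · intro t ht
    rw [interior_Ioi] at ht
    rw [(hder t ht).deriv]
    have := Real.one_sub_inv_le_log_of_pos ht
    linarith

lemma mh_aux_f_deriv : ∀ t ∈ Set.Ioi (0:ℝ),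
    HasDerivAt (fun t : ℝ => 2 * (t + 2) * (t * Real.log t - t + 1) - 3 * (t - 1) ^ 2)
      (4 * ((t + 1) * Real.log t - 2 * (t - 1))) t := by
  intro t ht
  have ht0 : (t:ℝ) ≠ 0 := ne_of_gt ht
  have h1 : HasDerivAt (fun t : ℝ => 2 * (t + 2)) 2 t := by
    simpa using ((hasDerivAt_id t).add_const 2).const_mul 2
  have h2 : HasDerivAt (fun t : ℝ => t * Real.log t - t + 1) (Real.log t + 1 - 1) t :=
    ((Real.hasDerivAt_mul_log ht0).sub (hasDerivAt_id t)).add_const 1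
  have h3 : HasDerivAt (fun t : ℝ => 3 * (t - 1) ^ 2) (3 * (2 * (t - 1))) t := by
    simpa using (((hasDerivAt_id t).sub_const 1).pow 2).const_mul 3
  have := (h1.mul h2).sub h3
  refine this.congr_deriv ?_
  ring

lemma mh_aux_key_t : ∀ t : ℝ, 0 < t →
    3 * (t - 1) ^ 2 ≤ 2 * (t + 2) * (t * Real.log t - t + 1) := by
  intro t ht
  set f : ℝ → ℝ := fun t => 2 * (t + 2) * (t * Real.log t - t + 1) - 3 * (t - 1) ^ 2 with hf
  have hf1 : f 1 = 0 := by simp [hf]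
  have hcont : ContinuousOn f (Set.Ioi 0) := by
    apply ContinuousOn.sub _ (by fun_prop)
    apply ContinuousOn.mul (by fun_prop)
    exact ContinuousOn.add (ContinuousOn.sub
      (by fun_prop (disch := intro t ht; exact ne_of_gt ht)) (by fun_prop)) (by fun_prop)
  have hfge : f 1 ≤ f t := by
    rcases le_total 1 t with h | h
    · have hmono : MonotoneOn f (Set.Ici 1) := by
        apply monotoneOn_of_deriv_nonneg (convex_Ici 1)
          (hcont.mono (fun x hx => show (0:ℝ) < x from lt_of_lt_of_le one_pos hx))
        · intro x hx
          rw [interior_Ici] at hx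
          exact (mh_aux_f_deriv x (show (0:ℝ) < x from lt_trans one_pos hx)).differentiableAt.differentiableWithinAt
        · intro x hx
          rw [interior_Ici] at hx
          rw [(mh_aux_f_deriv x (show (0:ℝ) < x from lt_trans one_pos hx)).deriv]
          have h0 : (fun t : ℝ => (t + 1) * Real.log t - 2 * (t - 1)) 1 ≤
              (fun t : ℝ => (t + 1) * Real.log t - 2 * (t - 1)) x :=
            mh_aux_g_mono (Set.mem_Ioi.2 one_pos) (Set.mem_Ioi.2 (lt_trans one_pos hx)) hx.le
          simp at h0
          linarith
      exact hmono (Set.mem_Ici.2 le_rfl) (Set.mem_Ici.2 h) h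
    · have hmono : AntitoneOn f (Set.Ioc 0 1) := by
        apply antitoneOn_of_deriv_nonpos (convex_Ioc 0 1)
          (hcont.mono (fun x hx => hx.1))
        · intro x hx
          rw [interior_Ioc] at hx
          exact (mh_aux_f_deriv x hx.1).differentiableAt.differentiableWithinAt
        · intro x hx
          rw [interior_Ioc] at hx
          rw [(mh_aux_f_deriv x hx.1).deriv]
          have h0 : (fun t : ℝ => (t + 1) * Real.log t - 2 * (t - 1)) x ≤
              (fun t : ℝ => (t + 1) * Real.log t - 2 * (t - 1)) 1 :=
            mh_aux_g_mono (Set.mem_Ioi.2 hx.1) (Set.mem_Ioi.2 one_pos) hx.2.le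
          simp at h0
          linarith
      exact hmono (Set.mem_Ioc.2 ⟨ht, h⟩) (Set.mem_Ioc.2 ⟨one_pos, le_rfl⟩) h
  rw [hf1] at hfge
  simp only [hf] at hfge
  linarith

/-- key two-variable inequality -/
lemma mh_aux_key (a b : ℝ) (ha : 0 < a) (hb : 0 < b) :
    (a - b) ^ 2 ≤ (a * Real.log (a / b) - a + b) * (2 / 3 * (a + 2 * b)) := by
  have ht := mh_aux_key_t (a / b) (div_pos ha hb)
  have hb0 : b ≠ 0 := ne_of_gt hb
  have e1 : b ^ 2 * (3 * (a / b - 1) ^ 2) = 3 * (a - b) ^ 2 := by field_simp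
  have e2 : b ^ 2 * (2 * (a / b + 2) * (a / b * Real.log (a / b) - a / b + 1)) =
      2 * (a + 2 * b) * (a * Real.log (a / b) - a + b) := by field_simp
  have := mul_le_mul_of_nonneg_left ht (sq_nonneg b)
  rw [e1, e2] at this
  nlinarith [this]

lemma mh_aux_nonneg (a b : ℝ) (ha : 0 < a) (hb : 0 < b) :
    0 ≤ a * Real.log (a / b) - a + b := by
  have h := mh_aux_key a b ha hb
  nlinarith [sq_nonneg (a - b)]


/-- Eq. (7) of the paper: the Metropolis–Hastings acceptance rate is lower bounded via
Pinsker's inequality by `1 - sqrt((1/2)·KL(p(x')q(x|x') ‖ p(x)q(x'|x)))`, where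
`KL(f‖g) = ∫∫ f log(f/g)`. Here `q x' x` denotes the transition density `q(x'|x)`. -/
theorem mh_acceptance_rate_ge_one_sub_sqrt_kl
    {d : ℕ} (p : (Fin d → ℝ) → ℝ) (q : (Fin d → ℝ) → (Fin d → ℝ) → ℝ)
    (hp_meas : Measurable p) (hq_meas : Measurable (Function.uncurry q))
    (hp_nonneg : ∀ x, 0 ≤ p x) (hq_nonneg : ∀ x' x, 0 ≤ q x' x)
    (hp_int : ∫ x, p x = 1) (hq_int : ∀ x, ∫ x', q x' x = 1)
    (h_pos : ∀ x x', 0 < p x * q x' x)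
    (h_kl_int : Integrable (fun z : (Fin d → ℝ) × (Fin d → ℝ) =>
      p z.2 * q z.1 z.2 * Real.log (p z.2 * q z.1 z.2 / (p z.1 * q z.2 z.1)))) :
    ∫ x, ∫ x', p x * q x' x * min 1 (p x' * q x x' / (p x * q x' x)) ≥
      1 - Real.sqrt ((1 / 2) *
        ∫ x, ∫ x', p x' * q x x' * Real.log (p x' * q x x' / (p x * q x' x))) := by
  set F : ((Fin d → ℝ) × (Fin d → ℝ)) → ℝ := fun z => p z.1 * q z.2 z.1 with hFdef
  set G : ((Fin d → ℝ) × (Fin d → ℝ)) → ℝ := fun z => p z.2 * q z.1 z.2 with hGdef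
  have hFm : Measurable F :=
    (hp_meas.comp measurable_fst).mul (hq_meas.comp (measurable_snd.prodMk measurable_fst))
  have hGm : Measurable G := (hp_meas.comp measurable_snd).mul hq_meas
  have hFpos : ∀ z, 0 < F z := fun z => h_pos z.1 z.2
  have hGpos : ∀ z, 0 < G z := fun z => h_pos z.2 z.1
  -- integrability of p and q
  have hp_i : Integrable p := by
    by_contra hc
    rw [integral_undef hc] at hp_int
    norm_num at hp_int
  have hq_i : ∀ x, Integrable (fun x' => q x' x) := by
    intro x
    by_contra hc
    have := hq_int x
    rw [integral_undef hc] at this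
    norm_num at this
  -- lintegral of F is 1
  have hFl : ∫⁻ z, ENNReal.ofReal (F z) = 1 := by
    rw [Measure.volume_eq_prod, lintegral_prod _ hFm.ennreal_ofReal.aemeasurable]
    have inner : ∀ x, (∫⁻ x', ENNReal.ofReal (F (x, x'))) = ENNReal.ofReal (p x) := by
      intro x
      calc (∫⁻ x', ENNReal.ofReal (p x * q x' x))
          = ∫⁻ x', ENNReal.ofReal (p x) * ENNReal.ofReal (q x' x) := by
            simp_rw [ENNReal.ofReal_mul (hp_nonneg x)]
        _ = ENNReal.ofReal (p x) * ∫⁻ x', ENNReal.ofReal (q x' x) :=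
            lintegral_const_mul' _ _ ENNReal.ofReal_ne_top
        _ = ENNReal.ofReal (p x) * 1 := by
            rw [← ofReal_integral_eq_lintegral_ofReal (hq_i x)
              (ae_of_all _ fun x' => hq_nonneg x' x), hq_int x, ENNReal.ofReal_one]
        _ = ENNReal.ofReal (p x) := mul_one _
    simp_rw [inner]
    rw [← ofReal_integral_eq_lintegral_ofReal hp_i (ae_of_all _ hp_nonneg), hp_int,
      ENNReal.ofReal_one]
  have hF_i : Integrable F := by
    refine ⟨hFm.aestronglyMeasurable, ?_⟩
    rw [hasFiniteIntegral_iff_ofReal (ae_of_all _ fun z => (hFpos z).le), hFl]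
    exact ENNReal.one_lt_top
  have hF1 : ∫ z, F z = 1 := by
    rw [integral_eq_lintegral_of_nonneg_ae (ae_of_all _ fun z => (hFpos z).le)
      hFm.aestronglyMeasurable, hFl]
    simp
  -- G via swap
  have hGF : G = F ∘ Prod.swap := rfl
  have hG_i : Integrable G := by
    rw [hGF]
    rw [Measure.volume_eq_prod]
    apply Integrable.swap
    rw [← Measure.volume_eq_prod]
    exact hF_i
  have hG1 : ∫ z, G z = 1 := by
    have : ∫ z, G z = ∫ z, F (Prod.swap z) := rfl
    rw [this, Measure.volume_eq_prod, integral_prod_swap F, ← Measure.volume_eq_prod, hF1]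
  -- KL as product integral
  have hKL_int : Integrable (fun z => G z * Real.log (G z / F z)) := h_kl_int
  have hKLit : (∫ x, ∫ x', p x' * q x x' * Real.log (p x' * q x x' / (p x * q x' x)))
      = ∫ z, G z * Real.log (G z / F z) := by
    have h1 : Integrable (Function.uncurry fun x x' =>
        G (x, x') * Real.log (G (x, x') / F (x, x'))) ((volume : Measure (Fin d → ℝ)).prod volume) := by
      rw [← Measure.volume_eq_prod]
      exact hKL_int
    calc (∫ x, ∫ x', p x' * q x x' * Real.log (p x' * q x x' / (p x * q x' x)))
        = ∫ z, G z * Real.log (G z / F z) ∂((volume : Measure (Fin d → ℝ)).prod volume) :=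
          integral_integral h1
      _ = ∫ z, G z * Real.log (G z / F z) := by rw [← Measure.volume_eq_prod]
  -- LHS as product integral of min
  have hM_i : Integrable (fun z => min (F z) (G z)) := by
    apply hF_i.mono (hFm.min hGm).aestronglyMeasurable
    apply ae_of_all
    intro z
    rw [Real.norm_eq_abs, Real.norm_eq_abs, abs_of_pos (lt_min (hFpos z) (hGpos z)),
      abs_of_pos (hFpos z)]
    exact min_le_left _ _
  have hLHS : (∫ x, ∫ x', p x * q x' x * min 1 (p x' * q x x' / (p x * q x' x)))
      = ∫ z, min (F z) (G z) := by
    have hpt : ∀ x x', p x * q x' x * min 1 (p x' * q x x' / (p x * q x' x))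
        = min (F (x, x')) (G (x, x')) := by
      intro x x'
      have hf : 0 < p x * q x' x := h_pos x x'
      rw [mul_min_of_nonneg _ _ hf.le, mul_one]
      congr 1
      rw [mul_comm, div_mul_cancel₀ _ (ne_of_gt hf)]
    simp_rw [hpt]
    have h1 : Integrable (Function.uncurry fun x x' => min (F (x, x')) (G (x, x')))
        ((volume : Measure (Fin d → ℝ)).prod volume) := by
      rw [← Measure.volume_eq_prod]
      exact hM_i
    calc (∫ x, ∫ x', min (F (x, x')) (G (x, x')))
        = ∫ z, min (F z) (G z) ∂((volume : Measure (Fin d → ℝ)).prod volume) :=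
          integral_integral h1
      _ = ∫ z, min (F z) (G z) := by rw [← Measure.volume_eq_prod]
  -- min integral identity
  have hD_i : Integrable (fun z => |F z - G z|) := (hF_i.sub hG_i).abs
  have hmin_eq : ∫ z, min (F z) (G z) = 1 - (1/2) * ∫ z, |F z - G z| := by
    have hpt : ∀ z, min (F z) (G z) = (F z + G z) / 2 - |F z - G z| / 2 := by
      intro z
      rcases le_total (F z) (G z) with h | h
      · rw [min_eq_left h, abs_of_nonpos (by linarith)]; ring
      · rw [min_eq_right h, abs_of_nonneg (by linarith)]; ring
    simp_rw [hpt]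
    have i1 : Integrable (fun z => (F z + G z) / 2) := (hF_i.add hG_i).div_const 2
    have i2 : Integrable (fun z => |F z - G z| / 2) := hD_i.div_const 2
    rw [integral_sub i1 i2, integral_div, integral_div, integral_add hF_i hG_i, hF1, hG1]
    ring
  -- nonneg divergence integrand
  set h0 : ((Fin d → ℝ) × (Fin d → ℝ)) → ℝ :=
    fun z => G z * Real.log (G z / F z) - G z + F z with hh0def
  have hh_m : Measurable h0 :=
    ((hGm.mul (Real.measurable_log.comp (hGm.div hFm))).sub hGm).add hFm
  have hh_i : Integrable h0 := (hKL_int.sub hG_i).add hF_i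
  have hh_nonneg : ∀ z, 0 ≤ h0 z := fun z => mh_aux_nonneg _ _ (hGpos z) (hFpos z)
  have hh_int_eq : ∫ z, h0 z = ∫ z, G z * Real.log (G z / F z) := by
    have i3 : Integrable (fun z => G z * Real.log (G z / F z) - G z) := hKL_int.sub hG_i
    have e0 : ∫ z, h0 z = ∫ z, (G z * Real.log (G z / F z) - G z) + F z := rfl
    rw [e0, integral_add i3 hF_i, integral_sub hKL_int hG_i, hF1, hG1]
    ring
  -- weight
  set w : ((Fin d → ℝ) × (Fin d → ℝ)) → ℝ := fun z => 2/3 * (G z + 2 * F z) with hwdef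
  have hw_m : Measurable w := ((hGm.add (hFm.const_mul 2)).const_mul (2/3))
  have hw_i : Integrable w := (hG_i.add (hF_i.const_mul 2)).const_mul (2/3)
  have hw_nonneg : ∀ z, 0 ≤ w z := by
    intro z
    have := (hFpos z).le
    have := (hGpos z).le
    positivity
  have hw_int : ∫ z, w z = 2 := by
    rw [hwdef]
    simp_rw [mul_comm (2/3 : ℝ)]
    rw [integral_mul_const, integral_add hG_i (hF_i.const_mul 2)]
    simp_rw [mul_comm (2 : ℝ)]
    rw [integral_mul_const, hF1, hG1]
    norm_num
  -- pointwise Cauchy-Schwarz bound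
  have hpt2 : ∀ z, |F z - G z| ≤ Real.sqrt (h0 z) * Real.sqrt (w z) := by
    intro z
    rw [← Real.sqrt_mul (hh_nonneg z), ← Real.sqrt_sq_eq_abs]
    apply Real.sqrt_le_sqrt
    have hk := mh_aux_key (G z) (F z) (hGpos z) (hFpos z)
    calc (F z - G z) ^ 2 = (G z - F z) ^ 2 := by ring
      _ ≤ (G z * Real.log (G z / F z) - G z + F z) * (2/3 * (G z + 2 * F z)) := hk
      _ = h0 z * w z := rfl
  -- L2 memberships
  have hsh_m : Measurable (fun z => Real.sqrt (h0 z)) := Real.continuous_sqrt.measurable.comp hh_m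
  have hsw_m : Measurable (fun z => Real.sqrt (w z)) := Real.continuous_sqrt.measurable.comp hw_m
  have hsh2 : MemLp (fun z => Real.sqrt (h0 z)) 2 volume := by
    rw [memLp_two_iff_integrable_sq hsh_m.aestronglyMeasurable]
    exact hh_i.congr (ae_of_all _ fun z => (Real.sq_sqrt (hh_nonneg z)).symm)
  have hsw2 : MemLp (fun z => Real.sqrt (w z)) 2 volume := by
    rw [memLp_two_iff_integrable_sq hsw_m.aestronglyMeasurable]
    exact hw_i.congr (ae_of_all _ fun z => (Real.sq_sqrt (hw_nonneg z)).symm)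
  have h2e : ENNReal.ofReal (2 : ℝ) = 2 := by norm_num
  have h22 : (2 : ℝ).HolderConjugate 2 := Real.HolderConjugate.two_two
  have hCS : ∫ z, Real.sqrt (h0 z) * Real.sqrt (w z)
      ≤ Real.sqrt (∫ z, h0 z) * Real.sqrt (∫ z, w z) := by
    have hH := integral_mul_le_Lp_mul_Lq_of_nonneg h22
      (ae_of_all _ fun z => Real.sqrt_nonneg (h0 z))
      (ae_of_all _ fun z => Real.sqrt_nonneg (w z))
      (by rw [h2e]; exact hsh2) (by rw [h2e]; exact hsw2)
    have e1 : ∫ z, Real.sqrt (h0 z) ^ (2:ℝ) = ∫ z, h0 z := by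
      congr 1
      funext z
      rw [Real.rpow_two, Real.sq_sqrt (hh_nonneg z)]
    have e2 : ∫ z, Real.sqrt (w z) ^ (2:ℝ) = ∫ z, w z := by
      congr 1
      funext z
      rw [Real.rpow_two, Real.sq_sqrt (hw_nonneg z)]
    rw [e1, e2, ← Real.sqrt_eq_rpow, ← Real.sqrt_eq_rpow] at hH
    exact hH
  -- product is integrable (AM-GM)
  have hmul_i : Integrable (fun z => Real.sqrt (h0 z) * Real.sqrt (w z)) := by
    have i5 : Integrable (fun z => (h0 z + w z) / 2) := (hh_i.add hw_i).div_const 2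
    apply Integrable.mono i5 (hsh_m.mul hsw_m).aestronglyMeasurable
    apply ae_of_all
    intro z
    have h1 := hh_nonneg z
    have h2 := hw_nonneg z
    have s1 := Real.sqrt_nonneg (h0 z)
    have s2 := Real.sqrt_nonneg (w z)
    have q1 := Real.sq_sqrt h1
    have q2 := Real.sq_sqrt h2
    have am := two_mul_le_add_sq (Real.sqrt (h0 z)) (Real.sqrt (w z))
    rw [q1, q2] at am
    rw [Real.norm_eq_abs, Real.norm_eq_abs, Pi.mul_apply, abs_of_nonneg (mul_nonneg s1 s2),
      abs_of_nonneg (div_nonneg (add_nonneg h1 h2) (by norm_num : (0:ℝ) ≤ 2))]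
    clear_value h0 w
    linarith
  -- Pinsker
  set KL : ℝ := ∫ z, G z * Real.log (G z / F z) with hKLdef
  have hKL_nonneg : 0 ≤ KL := by
    rw [← hh_int_eq]
    exact integral_nonneg hh_nonneg
  have hD_le : ∫ z, |F z - G z| ≤ Real.sqrt KL * Real.sqrt 2 := by
    calc ∫ z, |F z - G z| ≤ ∫ z, Real.sqrt (h0 z) * Real.sqrt (w z) :=
          integral_mono hD_i hmul_i hpt2
      _ ≤ Real.sqrt (∫ z, h0 z) * Real.sqrt (∫ z, w z) := hCS
      _ = Real.sqrt KL * Real.sqrt 2 := by rw [hh_int_eq, hw_int]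
  -- conclude
  rw [ge_iff_le, hLHS, hKLit, hmin_eq]
  have hs2 : Real.sqrt ((1/2) * KL) = Real.sqrt KL * Real.sqrt 2 / 2 := by
    have hv : ((Real.sqrt KL * Real.sqrt 2 / 2) : ℝ) ^ 2 = (1/2) * KL := by
      rw [div_pow, mul_pow, Real.sq_sqrt hKL_nonneg, Real.sq_sqrt (by norm_num : (0:ℝ) ≤ 2)]
      ring
    rw [← hv, Real.sqrt_sq (by positivity)]
  rw [hs2]
  linarith
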